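/- Let n ≥ 4 and let m₂₂, m₂₃ ∈ ℂ with m₂₂ ≠ 1 and m₂₃ ≠ 0. Put M = [[1,0,0],[0,m₂₂,m₂₃],[0,(1−m₂₂)/m₂₃,0]] and let N = (n_{pq}) be a 3×3 complex matrix. If the pair (M,N) satisfies the SMₙ mixed relations on M_{n+1}(ℂ), then n₁₁ = 1, n₁₂ = n₁₃ = n₂₁ = n₃₁ = 0, and: if m₂₂ = 0 then n₂₃ = m₂₃²·n₃₂ and n₃₃ = n₂₂; if m₂₂ ≠ 0 then n₂₂ = 1 − m₂₃n₃₂, n₂₃ = −m₂₃²n₃₂/(m₂₂ − 1), and n₃₃ = (m₂₂ + m₂₃n₃₂ − 1)/(m₂₂ − 1). -/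

import Mathlib

open Matrix

def loc3 (m i : ℕ) (P : Matrix (Fin 3) (Fin 3) ℂ) : Matrix (Fin m) (Fin m) ℂ :=
  Matrix.of fun r s =>
    if (r : ℕ) = i - 1 ∧ (s : ℕ) = i - 1 then P 0 0
    else if (r : ℕ) = i - 1 ∧ (s : ℕ) = i then P 0 1
    else if (r : ℕ) = i - 1 ∧ (s : ℕ) = i + 1 then P 0 2
    else if (r : ℕ) = i ∧ (s : ℕ) = i - 1 then P 1 0
    else if (r : ℕ) = i ∧ (s : ℕ) = i then P 1 1
    else if (r : ℕ) = i ∧ (s : ℕ) = i + 1 then P 1 2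
    else if (r : ℕ) = i + 1 ∧ (s : ℕ) = i - 1 then P 2 0
    else if (r : ℕ) = i + 1 ∧ (s : ℕ) = i then P 2 1
    else if (r : ℕ) = i + 1 ∧ (s : ℕ) = i + 1 then P 2 2
    else if r = s then 1 else 0

/-- entry function on naturals -/
def ent3 (i r s : ℕ) (P : Matrix (Fin 3) (Fin 3) ℂ) : ℂ :=
    if r = i - 1 ∧ s = i - 1 then P 0 0
    else if r = i - 1 ∧ s = i then P 0 1
    else if r = i - 1 ∧ s = i + 1 then P 0 2
    else if r = i ∧ s = i - 1 then P 1 0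
    else if r = i ∧ s = i then P 1 1
    else if r = i ∧ s = i + 1 then P 1 2
    else if r = i + 1 ∧ s = i - 1 then P 2 0
    else if r = i + 1 ∧ s = i then P 2 1
    else if r = i + 1 ∧ s = i + 1 then P 2 2
    else if r = s then 1 else 0

lemma loc3_apply (m i : ℕ) (P : Matrix (Fin 3) (Fin 3) ℂ) (r s : Fin m) :
    loc3 m i P r s = ent3 i r s P := by
  simp only [loc3, ent3, Matrix.of_apply, Fin.val_eq_val]

noncomputable def emb (n : ℕ) (hn : 4 ≤ n) (E : Matrix (Fin 5) (Fin 5) ℂ) :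
    Matrix (Fin (n+1)) (Fin (n+1)) ℂ :=
  Matrix.reindexAlgEquiv ℂ ℂ
    ((finSumFinEquiv (m := 5) (n := n - 4)).trans (finCongr (by omega)))
    (Matrix.fromBlocks E 0 0 1)

lemma emb_mul (n : ℕ) (hn : 4 ≤ n) (A B : Matrix (Fin 5) (Fin 5) ℂ) :
    emb n hn (A * B) = emb n hn A * emb n hn B := by
  unfold emb
  rw [← _root_.map_mul, Matrix.fromBlocks_multiply]
  simp

lemma emb_inj (n : ℕ) (hn : 4 ≤ n) {A B : Matrix (Fin 5) (Fin 5) ℂ}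
    (h : emb n hn A = emb n hn B) : A = B := by
  unfold emb at h
  have h2 := (Matrix.reindexAlgEquiv ℂ ℂ _).injective h
  ext r s
  have := congrFun (congrFun h2 (Sum.inl r)) (Sum.inl s)
  simpa using this

lemma ent3_right_big (i r s : ℕ) (P : Matrix (Fin 3) (Fin 3) ℂ)
    (hi3 : i ≤ 3) (hr : r < 5) (hs : 5 ≤ s) : ent3 i r s P = 0 := by
  unfold ent3
  rw [if_neg (by omega), if_neg (by omega), if_neg (by omega), if_neg (by omega),
    if_neg (by omega), if_neg (by omega), if_neg (by omega), if_neg (by omega),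
    if_neg (by omega), if_neg (by omega)]

lemma ent3_left_big (i r s : ℕ) (P : Matrix (Fin 3) (Fin 3) ℂ)
    (hi3 : i ≤ 3) (hr : 5 ≤ r) (hs : s < 5) : ent3 i r s P = 0 := by
  unfold ent3
  rw [if_neg (by omega), if_neg (by omega), if_neg (by omega), if_neg (by omega),
    if_neg (by omega), if_neg (by omega), if_neg (by omega), if_neg (by omega),
    if_neg (by omega), if_neg (by omega)]

lemma ent3_both_big (i r s : ℕ) (P : Matrix (Fin 3) (Fin 3) ℂ)
    (hi3 : i ≤ 3) (hr : 5 ≤ r) (hs : 5 ≤ s) :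
    ent3 i r s P = if r = s then 1 else 0 := by
  unfold ent3
  rw [if_neg (by omega), if_neg (by omega), if_neg (by omega), if_neg (by omega),
    if_neg (by omega), if_neg (by omega), if_neg (by omega), if_neg (by omega),
    if_neg (by omega)]

lemma loc3_eq_emb (n : ℕ) (hn : 4 ≤ n) (i : ℕ) (hi : 1 ≤ i) (hi3 : i ≤ 3)
    (P : Matrix (Fin 3) (Fin 3) ℂ) :
    loc3 (n+1) i P = emb n hn (loc3 5 i P) := by
  ext r s
  unfold emb
  rw [Matrix.reindexAlgEquiv_apply, Matrix.reindex_apply, Matrix.submatrix_apply]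
  set e := (finSumFinEquiv (m := 5) (n := n - 4)).trans (finCongr (show 5 + (n-4) = n + 1 by omega)) with he
  have hr : r = e (e.symm r) := (e.apply_symm_apply r).symm
  have hs : s = e (e.symm s) := (e.apply_symm_apply s).symm
  rw [loc3_apply]
  rcases hx : e.symm r with a | a <;> rcases hy : e.symm s with b | b <;>
    rw [hx] at hr <;> rw [hy] at hs <;>
    have hrv : (r : ℕ) = _ := congrArg Fin.val hr <;>
    simp only [he, Equiv.trans_apply, finCongr_apply, Fin.coe_cast, finSumFinEquiv_apply_left,
      finSumFinEquiv_apply_right, Fin.coe_castAdd, Fin.coe_natAdd] at hrv <;>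
    have hsv : (s : ℕ) = _ := congrArg Fin.val hs <;>
    simp only [he, Equiv.trans_apply, finCongr_apply, Fin.coe_cast, finSumFinEquiv_apply_left,
      finSumFinEquiv_apply_right, Fin.coe_castAdd, Fin.coe_natAdd] at hsv
  · rw [Matrix.fromBlocks_apply₁₁, loc3_apply, hrv, hsv]
  · rw [Matrix.fromBlocks_apply₁₂, hrv, hsv, Matrix.zero_apply,
      ent3_right_big _ _ _ _ hi3 a.isLt (by omega)]
  · rw [Matrix.fromBlocks_apply₂₁, hrv, hsv, Matrix.zero_apply,
      ent3_left_big _ _ _ _ hi3 (by omega) b.isLt]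
  · rw [Matrix.fromBlocks_apply₂₂, hrv, hsv,
      ent3_both_big _ _ _ _ hi3 (by omega) (by omega), Matrix.one_apply]
    have : (5 + (a : ℕ) = 5 + (b : ℕ)) ↔ a = b := by rw [Fin.ext_iff]; omega
    simp only [this]

/-- The pair `(M, N)` of 3×3 complex matrices satisfies the SMₙ mixed relations
on `M_{n+1}(ℂ)`. -/
def SMRel3 (n : ℕ) (M N : Matrix (Fin 3) (Fin 3) ℂ) : Prop :=
  (∀ i j : ℕ, 1 ≤ i → i ≤ n - 1 → 1 ≤ j → j ≤ n - 1 → (i + 2 ≤ j ∨ j + 2 ≤ i) →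
      loc3 (n + 1) i N * loc3 (n + 1) j N = loc3 (n + 1) j N * loc3 (n + 1) i N) ∧
  (∀ i j : ℕ, 1 ≤ i → i ≤ n - 1 → 1 ≤ j → j ≤ n - 1 → (i + 2 ≤ j ∨ j + 2 ≤ i) →
      loc3 (n + 1) i N * loc3 (n + 1) j M = loc3 (n + 1) j M * loc3 (n + 1) i N) ∧
  (∀ i : ℕ, 1 ≤ i → i ≤ n - 1 →
      loc3 (n + 1) i M * loc3 (n + 1) i N = loc3 (n + 1) i N * loc3 (n + 1) i M) ∧
  (∀ i : ℕ, 1 ≤ i → i ≤ n - 2 →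
      loc3 (n + 1) i M * loc3 (n + 1) (i + 1) M * loc3 (n + 1) i N
        = loc3 (n + 1) (i + 1) N * loc3 (n + 1) i M * loc3 (n + 1) (i + 1) M) ∧
  (∀ i : ℕ, 1 ≤ i → i ≤ n - 2 →
      loc3 (n + 1) (i + 1) M * loc3 (n + 1) i M * loc3 (n + 1) (i + 1) N
        = loc3 (n + 1) i N * loc3 (n + 1) (i + 1) M * loc3 (n + 1) i M)

theorem stmt9 (n : ℕ) (hn : 4 ≤ n) (m22 m23 : ℂ) (h22 : m22 ≠ 1) (h23 : m23 ≠ 0)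
    (N : Matrix (Fin 3) (Fin 3) ℂ)
    (h : SMRel3 n !![1, 0, 0; 0, m22, m23; 0, (1 - m22) / m23, 0] N) :
    N 0 0 = 1 ∧ N 0 1 = 0 ∧ N 0 2 = 0 ∧ N 1 0 = 0 ∧ N 2 0 = 0 ∧
    (m22 = 0 → N 1 2 = m23 ^ 2 * N 2 1 ∧ N 2 2 = N 1 1) ∧
    (m22 ≠ 0 → N 1 1 = 1 - m23 * N 2 1 ∧
      N 1 2 = -(m23 ^ 2 * N 2 1) / (m22 - 1) ∧
      N 2 2 = (m22 + m23 * N 2 1 - 1) / (m22 - 1)) := by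
  have hw1 : m22 - 1 ≠ 0 := sub_ne_zero.mpr h22
  set M : Matrix (Fin 3) (Fin 3) ℂ := !![1, 0, 0; 0, m22, m23; 0, (1 - m22) / m23, 0] with hM
  have hv := h.2.2.2.2 1 le_rfl (by omega)
  have hc := h.2.2.1 1 le_rfl (by omega)
  simp only [loc3_eq_emb n hn 1 (by omega) (by omega), loc3_eq_emb n hn 2 (by omega) (by omega),
    ← emb_mul] at hv hc
  have E1 := emb_inj n hn hv
  have E2 := emb_inj n hn hc
  have c0 : ((0:Fin 5):ℕ) = 0 := rfl
  have c1 : ((1:Fin 5):ℕ) = 1 := rfl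
  have c2 : ((2:Fin 5):ℕ) = 2 := rfl
  have c3 : ((3:Fin 5):ℕ) = 3 := rfl
  have c4 : ((4:Fin 5):ℕ) = 4 := rfl
  have q00 := congrFun (congrFun E1 0) 0
  have q10 := congrFun (congrFun E1 1) 0
  have q20 := congrFun (congrFun E1 2) 0
  have q02 := congrFun (congrFun E1 0) 2
  have q03 := congrFun (congrFun E1 0) 3
  have q11 := congrFun (congrFun E1 1) 1
  have r11 := congrFun (congrFun E2 1) 1
  have r12 := congrFun (congrFun E2 1) 2
  norm_num [Matrix.mul_apply, Fin.sum_univ_five, loc3_apply, ent3, c0, c1, c2, c3, c4, hM,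
    Matrix.vecHead, Matrix.vecTail, show (2:Fin 5) ≠ 0 by decide, show (3:Fin 5) ≠ 0 by decide,
    show (4:Fin 5) ≠ 0 by decide, Matrix.cons_val_two, Matrix.cons_val_one, Matrix.cons_val_zero] at q00 q10 q20 q02 q03 q11 r11 r12
  have hN01 : N 0 1 = 0 := q02.resolve_right h23
  have hN02 : N 0 2 = 0 := q03.resolve_right h23
  rw [← q00, ← q10] at q11
  field_simp at r11 r12 q11
  have e : N 1 2 * (1 - m22) = m23 ^ 2 * N 2 1 := by linear_combination -r11
  refine ⟨q00.symm, hN01, hN02, q10.symm, q20.symm, ?_, ?_⟩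
  · intro h0
    rw [h0] at r11 r12
    constructor
    · linear_combination -r11
    · exact mul_left_cancel₀ h23 (by linear_combination r12)
  · intro h0
    have hN11 : N 1 1 = 1 - m23 * N 2 1 := by
      have h2 := mul_left_cancel₀ (mul_ne_zero h0 h23)
        (show m22 * m23 * (N 1 1 + m23 * N 2 1) = m22 * m23 * 1 by
          linear_combination -q11 - m22 * e)
      linear_combination h2
    refine ⟨hN11, ?_, ?_⟩
    · rw [eq_div_iff hw1]
      first | linear_combination e | linear_combination -e
    · rw [eq_div_iff hw1]
      exact mul_left_cancel₀ h23
        (by linear_combination (m22 - 1) * r12 + m22 * e + ((m22 - 1) * m23) * hN11)
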